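/- Let n, m, r be natural numbers with m < n and r + n + 1 ≤ 2m. Let γ, δ be partial bijections of Fin n with r + 1 ≤ rank(γ) ≤ m and r + 1 ≤ rank(δ) ≤ m, and rank(γ·δ) = r. Then there exist partial bijections α, β of Fin n, each of rank r + 1, such that α·β = γ·δ and, in the free semigroup on the alphabet X = {μ ∈ I_n : r + 1 ≤ rank(μ) ≤ m}, the pair (x_γ·x_δ, x_α·x_β) lies in the congruence generated by R = {(x_μ·x_ν, x_{μν}) : r + 1 ≤ rank(μ), rank(ν), rank(μ·ν) ≤ m}. -/

import Mathlib

/-- The symmetric inverse monoid on `Fin n`: partial bijections under composition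
(`α * β` means "first apply `α`, then `β`"). -/
instance (n : ℕ) : Semigroup (PEquiv (Fin n) (Fin n)) where
  mul := PEquiv.trans
  mul_assoc a b c := by
    show (a.trans b).trans c = a.trans (b.trans c)
    ext x y
    simp [PEquiv.trans, Option.bind_assoc]

/-- The rank of a partial bijection: the cardinality of its domain. -/
noncomputable def prank {n : ℕ} (a : PEquiv (Fin n) (Fin n)) : ℕ :=
  Set.ncard {x : Fin n | (a x).isSome}

/-- The alphabet `X_{i,m}`: partial bijections `a` with `i ≤ rank a ≤ m`. -/
abbrev IX (n m i : ℕ) : Type :=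
  {a : PEquiv (Fin n) (Fin n) // i ≤ prank a ∧ prank a ≤ m}

/-- The relations `R_{i,m}` of the restricted Cayley table presentation. -/
def IRel (n m i : ℕ) : FreeSemigroup (IX n m i) → FreeSemigroup (IX n m i) → Prop :=
  fun u v =>
    ∃ (a b : PEquiv (Fin n) (Fin n)) (ha : i ≤ prank a ∧ prank a ≤ m)
      (hb : i ≤ prank b ∧ prank b ≤ m) (hab : i ≤ prank (a * b) ∧ prank (a * b) ≤ m),
      u = FreeSemigroup.of (⟨a, ha⟩ : IX n m i) * FreeSemigroup.of ⟨b, hb⟩ ∧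
      v = FreeSemigroup.of ⟨a * b, hab⟩


section Helpers

open Set FreeSemigroup

variable {n : ℕ}

/-- The partial identity on a set `S`. -/
noncomputable def idOn (S : Set (Fin n)) : PEquiv (Fin n) (Fin n) :=
  letI : DecidablePred (· ∈ S) := fun _ => Classical.propDecidable _
  PEquiv.ofSet S

lemma idOn_apply_of_mem {S : Set (Fin n)} {x : Fin n} (h : x ∈ S) : idOn S x = some x := by
  simp only [idOn, PEquiv.ofSet, PEquiv.coe_mk_apply]
  rw [if_pos h]

lemma idOn_apply_of_not_mem {S : Set (Fin n)} {x : Fin n} (h : x ∉ S) : idOn S x = none := by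
  simp only [idOn, PEquiv.ofSet, PEquiv.coe_mk_apply]
  rw [if_neg h]

lemma idOn_symm (S : Set (Fin n)) : (idOn S).symm = idOn S := rfl

lemma mul_def (a b : PEquiv (Fin n) (Fin n)) : a * b = a.trans b := rfl

lemma pequiv_mul_apply (a b : PEquiv (Fin n) (Fin n)) (x : Fin n) : (a * b) x = (a x).bind b := rfl

/-- The domain of a partial bijection. -/
def pdom (a : PEquiv (Fin n) (Fin n)) : Set (Fin n) := {x | (a x).isSome}

/-- The image of a partial bijection. -/
def pim (a : PEquiv (Fin n) (Fin n)) : Set (Fin n) := {y | (a.symm y).isSome}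

lemma mem_pim {a : PEquiv (Fin n) (Fin n)} {x y : Fin n} (h : a x = some y) : y ∈ pim a := by
  have hx : a.symm y = some x := a.eq_some_iff.mpr h
  show (a.symm y).isSome = true
  rw [hx]
  rfl

lemma prank_def (a : PEquiv (Fin n) (Fin n)) : prank a = (pdom a).ncard := rfl

/-- Core counting lemma: preimages of `T` have the same cardinality as `pim a ∩ T`. -/
lemma ncard_setOf_exists (a : PEquiv (Fin n) (Fin n)) (T : Set (Fin n)) :
    {x | ∃ y ∈ T, a x = some y}.ncard = (pim a ∩ T).ncard := by
  set S : Set (Fin n) := {x | ∃ y ∈ T, a x = some y} with hS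
  set f : Fin n → Fin n := fun x => (a x).getD x with hf
  have hinj : S.InjOn f := by
    rintro x₁ ⟨y₁, hy₁T, hy₁⟩ x₂ ⟨y₂, hy₂T, hy₂⟩ hfe
    simp only [hf, hy₁, hy₂, Option.getD_some] at hfe
    subst hfe
    exact a.inj (Option.mem_def.mpr hy₁) (Option.mem_def.mpr hy₂)
  have himg : f '' S = pim a ∩ T := by
    ext y
    constructor
    · rintro ⟨x, ⟨y', hy'T, hy'⟩, rfl⟩
      simp only [hf, hy', Option.getD_some]
      exact ⟨mem_pim hy', hy'T⟩
    · rintro ⟨hyim, hyT⟩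
      obtain ⟨x, hx⟩ := Option.isSome_iff_exists.mp hyim
      have hax : a x = some y := a.eq_some_iff.mp hx
      exact ⟨x, ⟨y, hyT, hax⟩, by simp [hf, hax]⟩
  rw [← himg, Set.ncard_image_of_injOn hinj]

lemma prank_mul (a b : PEquiv (Fin n) (Fin n)) :
    prank (a * b) = (pim a ∩ pdom b).ncard := by
  rw [prank_def, ← ncard_setOf_exists a (pdom b)]
  congr 1
  ext x
  show ((a x).bind b).isSome = true ↔ _
  cases h : a x with
  | none => simp [h]
  | some y =>
    simp only [h, Option.bind_some, Set.mem_setOf_eq, Option.some.injEq]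
    constructor
    · intro hb; exact ⟨y, hb, rfl⟩
    · rintro ⟨y', hy', rfl⟩; exact hy'

lemma prank_eq_ncard_pim (a : PEquiv (Fin n) (Fin n)) : prank a = (pim a).ncard := by
  have h := ncard_setOf_exists a Set.univ
  rw [Set.inter_univ] at h
  rw [prank_def, ← h]
  congr 1
  ext x
  constructor
  · intro hx
    obtain ⟨y, hy⟩ := Option.isSome_iff_exists.mp hx
    exact ⟨y, trivial, hy⟩
  · rintro ⟨y, -, hy⟩
    show (a x).isSome = true
    rw [hy]
    rfl

lemma pdom_idOn (S : Set (Fin n)) : pdom (idOn S) = S := by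
  ext x
  by_cases h : x ∈ S <;> simp [pdom, idOn_apply_of_mem, idOn_apply_of_not_mem, h]

lemma pim_idOn (S : Set (Fin n)) : pim (idOn S) = S := by
  rw [pim, ← pdom, idOn_symm, pdom_idOn]

lemma prank_idOn (S : Set (Fin n)) : prank (idOn S) = S.ncard := by
  rw [prank_def, pdom_idOn]

lemma pdom_idOn_mul (S : Set (Fin n)) (a : PEquiv (Fin n) (Fin n)) :
    pdom (idOn S * a) = S ∩ pdom a := by
  ext x
  by_cases h : x ∈ S
  · simp [pdom, pequiv_mul_apply, idOn_apply_of_mem h, h]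
  · simp [pdom, pequiv_mul_apply, idOn_apply_of_not_mem h, h]

lemma pim_mul_idOn (a : PEquiv (Fin n) (Fin n)) (S : Set (Fin n)) :
    pim (a * idOn S) = pim a ∩ S := by
  show pdom ((a.trans (idOn S)).symm) = _
  rw [PEquiv.symm_trans_rev, idOn_symm]
  show pdom (idOn S * a.symm) = _
  rw [pdom_idOn_mul, Set.inter_comm]
  rfl

lemma mul_idOn_of_subset {a : PEquiv (Fin n) (Fin n)} {S : Set (Fin n)}
    (h : pim a ⊆ S) : a * idOn S = a := by
  apply PEquiv.ext
  intro x
  rw [pequiv_mul_apply]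
  cases ha : a x with
  | none => rfl
  | some y => exact idOn_apply_of_mem (h (mem_pim ha))

lemma idOn_mul_of_subset {a : PEquiv (Fin n) (Fin n)} {S : Set (Fin n)}
    (h : pdom a ⊆ S) : idOn S * a = a := by
  apply PEquiv.ext
  intro x
  rw [pequiv_mul_apply]
  by_cases hx : x ∈ S
  · rw [idOn_apply_of_mem hx]
    rfl
  · rw [idOn_apply_of_not_mem hx]
    have hxd : x ∉ pdom a := fun hmem => hx (h hmem)
    cases hax : a x with
    | none => rfl
    | some y => exact absurd (by show (a x).isSome = true; rw [hax]; rfl) hxd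

lemma rel_step {m i : ℕ} (a b : PEquiv (Fin n) (Fin n))
    (ha : i ≤ prank a ∧ prank a ≤ m) (hb : i ≤ prank b ∧ prank b ≤ m)
    (hab : i ≤ prank (a * b) ∧ prank (a * b) ≤ m) :
    conGen (IRel n m i)
      (FreeSemigroup.of (⟨a, ha⟩ : IX n m i) * FreeSemigroup.of ⟨b, hb⟩)
      (FreeSemigroup.of ⟨a * b, hab⟩) :=
  ConGen.Rel.of _ _ ⟨a, b, ha, hb, hab, rfl, rfl⟩

/-- Pattern P: absorb the partial identity on the left factor, merge it into the right. -/
lemma patternP {m r : ℕ} (a d : PEquiv (Fin n) (Fin n)) (S : Set (Fin n))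
    (ha : r + 1 ≤ prank a ∧ prank a ≤ m) (hd : r + 1 ≤ prank d ∧ prank d ≤ m)
    (hS : r + 1 ≤ prank (idOn S : PEquiv (Fin n) (Fin n)) ∧
        prank (idOn S : PEquiv (Fin n) (Fin n)) ≤ m)
    (hp : a * idOn S = a)
    (hmm : r + 1 ≤ prank (idOn S * d) ∧ prank (idOn S * d) ≤ m) :
    conGen (IRel n m (r + 1))
      (FreeSemigroup.of (⟨a, ha⟩ : IX n m (r + 1)) * FreeSemigroup.of ⟨d, hd⟩)
      (FreeSemigroup.of (⟨a, ha⟩ : IX n m (r + 1)) * FreeSemigroup.of ⟨idOn S * d, hmm⟩) := by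
  have haS : r + 1 ≤ prank (a * idOn S) ∧ prank (a * idOn S) ≤ m := by rw [hp]; exact ha
  have h1 : conGen (IRel n m (r + 1))
      (FreeSemigroup.of (⟨a, ha⟩ : IX n m (r + 1)) * FreeSemigroup.of ⟨idOn S, hS⟩)
      (FreeSemigroup.of (⟨a, ha⟩ : IX n m (r + 1))) := by
    have := rel_step a (idOn S) ha hS haS
    have he : (⟨a * idOn S, haS⟩ : IX n m (r + 1)) = ⟨a, ha⟩ := Subtype.ext hp
    rwa [he] at this
  have h2 := rel_step (idOn S) d hS hd hmm
  have hstep1 : conGen (IRel n m (r+1))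
      (FreeSemigroup.of (⟨a, ha⟩ : IX n m (r + 1)) * FreeSemigroup.of ⟨d, hd⟩)
      ((FreeSemigroup.of (⟨a, ha⟩ : IX n m (r + 1)) * FreeSemigroup.of ⟨idOn S, hS⟩) *
        FreeSemigroup.of ⟨d, hd⟩) :=
    (conGen (IRel n m (r+1))).mul h1.symm ((conGen (IRel n m (r+1))).refl _)
  have hstep2 : conGen (IRel n m (r+1))
      ((FreeSemigroup.of (⟨a, ha⟩ : IX n m (r + 1)) * FreeSemigroup.of ⟨idOn S, hS⟩) *
        FreeSemigroup.of ⟨d, hd⟩)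
      (FreeSemigroup.of (⟨a, ha⟩ : IX n m (r + 1)) * FreeSemigroup.of ⟨idOn S * d, hmm⟩) := by
    rw [mul_assoc]
    exact (conGen (IRel n m (r+1))).mul ((conGen (IRel n m (r+1))).refl _) h2
  exact hstep1.trans hstep2

/-- Pattern Q: absorb the partial identity on the right factor, merge it into the left. -/
lemma patternQ {m r : ℕ} (a d : PEquiv (Fin n) (Fin n)) (S : Set (Fin n))
    (ha : r + 1 ≤ prank a ∧ prank a ≤ m) (hd : r + 1 ≤ prank d ∧ prank d ≤ m)
    (hS : r + 1 ≤ prank (idOn S : PEquiv (Fin n) (Fin n)) ∧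
        prank (idOn S : PEquiv (Fin n) (Fin n)) ≤ m)
    (hq : idOn S * d = d)
    (hmm : r + 1 ≤ prank (a * idOn S) ∧ prank (a * idOn S) ≤ m) :
    conGen (IRel n m (r + 1))
      (FreeSemigroup.of (⟨a, ha⟩ : IX n m (r + 1)) * FreeSemigroup.of ⟨d, hd⟩)
      (FreeSemigroup.of (⟨a * idOn S, hmm⟩ : IX n m (r + 1)) * FreeSemigroup.of ⟨d, hd⟩) := by
  have hSd : r + 1 ≤ prank (idOn S * d) ∧ prank (idOn S * d) ≤ m := by rw [hq]; exact hd
  have h1 : conGen (IRel n m (r + 1))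
      (FreeSemigroup.of (⟨idOn S, hS⟩ : IX n m (r + 1)) * FreeSemigroup.of ⟨d, hd⟩)
      (FreeSemigroup.of (⟨d, hd⟩ : IX n m (r + 1))) := by
    have := rel_step (idOn S) d hS hd hSd
    have he : (⟨idOn S * d, hSd⟩ : IX n m (r + 1)) = ⟨d, hd⟩ := Subtype.ext hq
    rwa [he] at this
  have h2 := rel_step a (idOn S) ha hS hmm
  have hstep1 : conGen (IRel n m (r+1))
      (FreeSemigroup.of (⟨a, ha⟩ : IX n m (r + 1)) * FreeSemigroup.of ⟨d, hd⟩)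
      (FreeSemigroup.of (⟨a, ha⟩ : IX n m (r + 1)) *
        (FreeSemigroup.of (⟨idOn S, hS⟩ : IX n m (r + 1)) * FreeSemigroup.of ⟨d, hd⟩)) :=
    (conGen (IRel n m (r+1))).mul ((conGen (IRel n m (r+1))).refl _) h1.symm
  have hstep2 : conGen (IRel n m (r+1))
      (FreeSemigroup.of (⟨a, ha⟩ : IX n m (r + 1)) *
        (FreeSemigroup.of (⟨idOn S, hS⟩ : IX n m (r + 1)) * FreeSemigroup.of ⟨d, hd⟩))
      (FreeSemigroup.of (⟨a * idOn S, hmm⟩ : IX n m (r + 1)) * FreeSemigroup.of ⟨d, hd⟩) := by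
    rw [← mul_assoc]
    exact (conGen (IRel n m (r+1))).mul h2 ((conGen (IRel n m (r+1))).refl _)
  exact hstep1.trans hstep2

end Helpers

/-- In the symmetric inverse monoid, if `r + 1 ≤ rank γ, rank δ ≤ m` and `rank (γδ) = r`,
then there are `α, β` of rank `r + 1` with `αβ = γδ` such that `x_γ x_δ = x_α x_β` is a
consequence of the Cayley relations among elements of rank between `r + 1` and `m`
(assuming `m < n` and `r + n + 1 ≤ 2m`). -/
theorem stmt_12 (n m r : ℕ) (hm : m < n) (hr : r + n + 1 ≤ 2 * m)
    (γ δ : PEquiv (Fin n) (Fin n))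
    (hγ₁ : r + 1 ≤ prank γ) (hγ₂ : prank γ ≤ m)
    (hδ₁ : r + 1 ≤ prank δ) (hδ₂ : prank δ ≤ m)
    (hrank : prank (γ * δ) = r) :
    ∃ α β : IX n m (r + 1), prank α.val = r + 1 ∧ prank β.val = r + 1 ∧
      α.val * β.val = γ * δ ∧
      conGen (IRel n m (r + 1))
        (FreeSemigroup.of (⟨γ, ⟨hγ₁, hγ₂⟩⟩ : IX n m (r + 1)) *
          FreeSemigroup.of (⟨δ, ⟨hδ₁, hδ₂⟩⟩ : IX n m (r + 1)))
        (FreeSemigroup.of α * FreeSemigroup.of β) := by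
  classical
  set A := pim γ with hA
  set B := pdom δ with hB
  have hgA : prank γ = A.ncard := prank_eq_ncard_pim γ
  have hdB : prank δ = B.ncard := rfl
  have hABr : (A ∩ B).ncard = r := by rw [← prank_mul]; exact hrank
  have hrm : r + 2 ≤ m := by omega
  -- element e ∈ A \ B
  have hnAB : ¬ A ⊆ B := by
    intro hsub
    rw [Set.inter_eq_self_of_subset_left hsub] at hABr
    omega
  obtain ⟨e, heA, heB⟩ := Set.not_subset.mp hnAB
  -- element c ∈ B \ A
  have hnBA : ¬ B ⊆ A := by
    intro hsub
    rw [Set.inter_eq_self_of_subset_right hsub] at hABr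
    omega
  obtain ⟨c, hcB, hcA⟩ := Set.not_subset.mp hnBA
  have heAB : e ∉ A ∩ B := fun h => heB h.2
  have hcAB : c ∉ A ∩ B := fun h => hcA h.1
  have hceAB : (insert e (A ∩ B)).ncard = r + 1 := by
    rw [Set.ncard_insert_of_notMem heAB, hABr]
  have hccAB : (insert c (A ∩ B)).ncard = r + 1 := by
    rw [Set.ncard_insert_of_notMem hcAB, hABr]
  -- the union bound
  have hunion : (A ∪ B).ncard + (A ∩ B).ncard = A.ncard + B.ncard :=
    Set.ncard_union_add_ncard_inter A B
  have huniv : (A ∪ B).ncard ≤ n := by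
    have h1 : (A ∪ B).ncard ≤ (Set.univ : Set (Fin n)).ncard :=
      Set.ncard_le_ncard (Set.subset_univ _) Set.finite_univ
    rwa [Set.ncard_univ, Nat.card_eq_fintype_card, Fintype.card_fin] at h1
  rcases le_or_gt (B.ncard + 1) m with hcase | hcase
  · -- Case 1 : rank δ + 1 ≤ m
    set S₁ : Set (Fin n) := insert e B with hS₁def
    have hS₁card : prank (idOn S₁ : PEquiv (Fin n) (Fin n)) = B.ncard + 1 := by
      rw [prank_idOn, Set.ncard_insert_of_notMem heB]
    have hS₁ : r + 1 ≤ prank (idOn S₁ : PEquiv (Fin n) (Fin n)) ∧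
        prank (idOn S₁ : PEquiv (Fin n) (Fin n)) ≤ m := by
      constructor <;> rw [hS₁card] <;> omega
    have hq1 : idOn S₁ * δ = δ := idOn_mul_of_subset (Set.subset_insert e B)
    set α₁ := γ * idOn S₁ with hα₁def
    have hpimα₁ : pim α₁ = insert e (A ∩ B) := by
      rw [hα₁def, pim_mul_idOn, hS₁def, Set.inter_insert_of_mem heA]
    have hα₁rank : prank α₁ = r + 1 := by
      rw [prank_eq_ncard_pim, hpimα₁, hceAB]
    have hα₁ : r + 1 ≤ prank α₁ ∧ prank α₁ ≤ m := by
      constructor <;> rw [hα₁rank] <;> omega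
    -- step 1: x_γ x_δ ~ x_{α₁} x_δ
    have step1 := patternQ γ δ S₁ ⟨hγ₁, hγ₂⟩ ⟨hδ₁, hδ₂⟩ hS₁ hq1 hα₁
    -- second set T
    set T : Set (Fin n) := insert c (insert e (A ∩ B)) with hTdef
    have hcT : c ∉ insert e (A ∩ B) := by
      intro h
      rcases h with h | h
      · exact heB (h ▸ hcB)
      · exact hcAB h
    have hTcard : prank (idOn T : PEquiv (Fin n) (Fin n)) = r + 2 := by
      rw [prank_idOn, hTdef, Set.ncard_insert_of_notMem hcT, hceAB]
    have hT : r + 1 ≤ prank (idOn T : PEquiv (Fin n) (Fin n)) ∧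
        prank (idOn T : PEquiv (Fin n) (Fin n)) ≤ m := by
      constructor <;> rw [hTcard] <;> omega
    have hp2 : α₁ * idOn T = α₁ :=
      mul_idOn_of_subset (by rw [hpimα₁, hTdef]; exact Set.subset_insert _ _)
    set β₁ := idOn T * δ with hβ₁def
    have hTB : T ∩ B = insert c (A ∩ B) := by
      rw [hTdef, Set.insert_inter_of_mem hcB, Set.insert_inter_of_notMem heB,
        Set.inter_eq_self_of_subset_left Set.inter_subset_right]
    have hβ₁rank : prank β₁ = r + 1 := by
      rw [hβ₁def, prank_mul, pim_idOn, ← hB, hTB, hccAB]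
    have hβ₁ : r + 1 ≤ prank β₁ ∧ prank β₁ ≤ m := by
      constructor <;> rw [hβ₁rank] <;> omega
    have step2 := patternP α₁ δ T hα₁ ⟨hδ₁, hδ₂⟩ hT hp2 hβ₁
    refine ⟨⟨α₁, hα₁⟩, ⟨β₁, hβ₁⟩, hα₁rank, hβ₁rank, ?_, step1.trans step2⟩
    calc α₁ * β₁ = (α₁ * idOn T) * δ := (mul_assoc _ _ _).symm
      _ = α₁ * δ := by rw [hp2]
      _ = γ * (idOn S₁ * δ) := mul_assoc _ _ _
      _ = γ * δ := by rw [hq1]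
  · -- Case 2 : rank δ = m, so rank γ + 1 ≤ m
    have hAcard : A.ncard + 1 ≤ m := by omega
    set S₂ : Set (Fin n) := insert c A with hS₂def
    have hS₂card : prank (idOn S₂ : PEquiv (Fin n) (Fin n)) = A.ncard + 1 := by
      rw [prank_idOn, Set.ncard_insert_of_notMem hcA]
    have hS₂ : r + 1 ≤ prank (idOn S₂ : PEquiv (Fin n) (Fin n)) ∧
        prank (idOn S₂ : PEquiv (Fin n) (Fin n)) ≤ m := by
      constructor <;> rw [hS₂card] <;> omega
    have hp1 : γ * idOn S₂ = γ := mul_idOn_of_subset (Set.subset_insert c A)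
    set β₂ := idOn S₂ * δ with hβ₂def
    have hS₂B : S₂ ∩ B = insert c (A ∩ B) := by
      rw [hS₂def, Set.insert_inter_of_mem hcB]
    have hβ₂rank : prank β₂ = r + 1 := by
      rw [hβ₂def, prank_mul, pim_idOn, ← hB, hS₂B, hccAB]
    have hβ₂ : r + 1 ≤ prank β₂ ∧ prank β₂ ≤ m := by
      constructor <;> rw [hβ₂rank] <;> omega
    have step1 := patternP γ δ S₂ ⟨hγ₁, hγ₂⟩ ⟨hδ₁, hδ₂⟩ hS₂ hp1 hβ₂
    -- second set T₂
    have hpdomβ₂ : pdom β₂ = insert c (A ∩ B) := by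
      rw [hβ₂def, pdom_idOn_mul, ← hB, hS₂B]
    set T₂ : Set (Fin n) := insert e (insert c (A ∩ B)) with hT₂def
    have heT : e ∉ insert c (A ∩ B) := by
      intro h
      rcases h with h | h
      · exact hcA (h ▸ heA)
      · exact heAB h
    have hT₂card : prank (idOn T₂ : PEquiv (Fin n) (Fin n)) = r + 2 := by
      rw [prank_idOn, hT₂def, Set.ncard_insert_of_notMem heT, hccAB]
    have hT₂ : r + 1 ≤ prank (idOn T₂ : PEquiv (Fin n) (Fin n)) ∧
        prank (idOn T₂ : PEquiv (Fin n) (Fin n)) ≤ m := by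
      constructor <;> rw [hT₂card] <;> omega
    have hq2 : idOn T₂ * β₂ = β₂ :=
      idOn_mul_of_subset (by rw [hpdomβ₂, hT₂def]; exact Set.subset_insert _ _)
    set α₂ := γ * idOn T₂ with hα₂def
    have hAT₂ : A ∩ T₂ = insert e (A ∩ B) := by
      rw [hT₂def, Set.inter_insert_of_mem heA, Set.inter_insert_of_notMem hcA,
        Set.inter_eq_self_of_subset_right Set.inter_subset_left]
    have hα₂rank : prank α₂ = r + 1 := by
      rw [hα₂def, prank_eq_ncard_pim, pim_mul_idOn, ← hA, hAT₂, hceAB]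
    have hα₂ : r + 1 ≤ prank α₂ ∧ prank α₂ ≤ m := by
      constructor <;> rw [hα₂rank] <;> omega
    have step2 := patternQ γ β₂ T₂ ⟨hγ₁, hγ₂⟩ hβ₂ hT₂ hq2 hα₂
    refine ⟨⟨α₂, hα₂⟩, ⟨β₂, hβ₂⟩, hα₂rank, hβ₂rank, ?_, step1.trans step2⟩
    calc α₂ * β₂ = γ * (idOn T₂ * β₂) := mul_assoc _ _ _
      _ = γ * β₂ := by rw [hq2]
      _ = (γ * idOn S₂) * δ := (mul_assoc _ _ _).symm
      _ = γ * δ := by rw [hp1]
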